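/- Let A ⊆ ℤ^k be a finite set contained in the box C = ∏_{i=1}^k {−n_i+1, ..., n_i−1} (with 0 ∈ A), and suppose the subgroup Λ of ℤ^k generated by A is generated by linearly independent vectors v₁, ..., v_k which are in lower-triangular Hermite-type form: v_{j,i} = 0 for j > i, |v_{j,i}| ≤ |v_{i,i}| for j ≤ i, and v_{i,i} ≠ 0. Then for every point p = p₁v₁ + ... + p_kv_k ∈ C ∩ Λ, we have |p_i| ≤ 2^{i−1}(n_i − 1) for all 1 ≤ i ≤ k, assuming n₁ ≤ n₂ ≤ ... ≤ n_k. -/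

import Mathlib

open Finset

/-- If the subgroup generated by `A ⊆ C = ∏ {-nᵢ+1, …, nᵢ-1}` is generated by linearly
independent vectors `v₁, …, v_k` in lower-triangular Hermite-type form and
`n₁ ≤ ⋯ ≤ n_k`, then any `p₁ v₁ + ⋯ + p_k v_k ∈ C` has `|pᵢ| ≤ 2^{i-1} (nᵢ - 1)`. -/
theorem hermite_coefficient_bound (k : ℕ) (n : Fin k → ℤ)
    (hmono : ∀ i j : Fin k, i ≤ j → n i ≤ n j)
    (A : Set (Fin k → ℤ)) (h0A : (0 : Fin k → ℤ) ∈ A)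
    (hAC : ∀ a ∈ A, ∀ i, |a i| ≤ n i - 1)
    (v : Fin k → Fin k → ℤ)
    (hspan : AddSubgroup.closure A = AddSubgroup.closure (Set.range v))
    (htri : ∀ i j : Fin k, i < j → v j i = 0)
    (hdom : ∀ i j : Fin k, j ≤ i → |v j i| ≤ |v i i|)
    (hdiag : ∀ i, v i i ≠ 0)
    (p : Fin k → ℤ) (hp : ∀ i, |∑ j, p j * v j i| ≤ n i - 1) :
    ∀ i, |p i| ≤ 2 ^ (i : ℕ) * (n i - 1) := by
  have hn : ∀ i, (0:ℤ) ≤ n i - 1 := fun i => by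
    have := hAC 0 h0A i; simp at this; linarith
  have hv1 : ∀ i, (1:ℤ) ≤ |v i i| := fun i => Int.one_le_abs (hdiag i)
  suffices H : ∀ N : ℕ, ∀ i : Fin k, (i:ℕ) < N → |p i| ≤ 2 ^ (i : ℕ) * (n i - 1) by
    exact fun i => H ((i:ℕ)+1) i (Nat.lt_succ_self _)
  intro N
  induction N with
  | zero => exact fun i hi => absurd hi (Nat.not_lt_zero _)
  | succ N ihN =>
    intro i hiN
    have ih : ∀ j : Fin k, j < i → |p j| ≤ 2 ^ (j : ℕ) * (n j - 1) :=
      fun j hj => ihN j (by have := Fin.lt_def.mp hj; omega)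
    have hsplit : p i * v i i = (∑ j, p j * v j i) - ∑ j ∈ univ.erase i, p j * v j i := by
      rw [eq_sub_iff_add_eq, add_comm, Finset.sum_erase_add _ _ (mem_univ i)]
    have herase : ∑ j ∈ univ.erase i, |p j * v j i|
        = ∑ j ∈ univ.filter (· < i), |p j * v j i| := by
      refine (Finset.sum_subset ?_ ?_).symm
      · intro j hj
        simp only [mem_filter, mem_univ, true_and] at hj
        simp [ne_of_lt hj]
      · intro j hj hj'
        simp only [mem_erase, mem_univ, and_true] at hj
        simp only [mem_filter, mem_univ, true_and] at hj'
        have : i < j := lt_of_le_of_ne (not_lt.mp hj') (Ne.symm hj)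
        simp [htri i j this]
    have hbound : ∀ j ∈ univ.filter (· < i),
        |p j * v j i| ≤ 2 ^ (j:ℕ) * ((n i - 1) * |v i i|) := by
      intro j hj
      simp only [mem_filter, mem_univ, true_and] at hj
      rw [abs_mul]
      have h1 : |p j| * |v j i| ≤ (2 ^ (j:ℕ) * (n j - 1)) * |v i i| :=
        mul_le_mul (ih j hj) (hdom i j hj.le) (abs_nonneg _)
          (mul_nonneg (by positivity) (hn j))
      have h2 : n j ≤ n i := hmono j i hj.le
      have h3 : (0:ℤ) ≤ |v i i| := abs_nonneg _
      have h4 : (0:ℤ) < 2 ^ (j:ℕ) := by positivity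
      have h5 : (n j - 1) * |v i i| ≤ (n i - 1) * |v i i| :=
        mul_le_mul_of_nonneg_right (by linarith) h3
      have h6 := mul_le_mul_of_nonneg_left h5 h4.le
      calc |p j| * |v j i| ≤ 2 ^ (j:ℕ) * (n j - 1) * |v i i| := h1
        _ = 2 ^ (j:ℕ) * ((n j - 1) * |v i i|) := mul_assoc _ _ _
        _ ≤ 2 ^ (j:ℕ) * ((n i - 1) * |v i i|) := h6
    have hgeom : ∑ j ∈ univ.filter (· < i), (2:ℤ) ^ (j:ℕ) = 2 ^ (i:ℕ) - 1 := by
      have e1 : ∑ j ∈ univ.filter (· < i), (2:ℤ) ^ (j:ℕ)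
          = ∑ j : Fin k, (if (j:ℕ) < (i:ℕ) then (2:ℤ) ^ (j:ℕ) else 0) := by
        rw [Finset.sum_filter]
        refine Finset.sum_congr rfl fun j _ => ?_
        simp only [Fin.lt_def]
      rw [e1, Fin.sum_univ_eq_sum_range (fun m => if m < (i:ℕ) then (2:ℤ) ^ m else 0)]
      have e2 : ∑ m ∈ Finset.range k, (if m < (i:ℕ) then (2:ℤ) ^ m else 0)
          = ∑ m ∈ Finset.range (i:ℕ), (2:ℤ) ^ m := by
        rw [← Finset.sum_subset (Finset.range_subset_range.2 i.2.le)
          (fun m _ hm => if_neg (Finset.mem_range.not.mp hm))]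
        refine Finset.sum_congr rfl fun m hm => ?_
        simp [Finset.mem_range.mp hm]
      rw [e2]
      have := geom_sum_mul (2:ℤ) (i:ℕ)
      simpa using this
    have hmain : |p i| * |v i i| ≤ (2 ^ (i:ℕ) * (n i - 1)) * |v i i| := by
      calc |p i| * |v i i| = |p i * v i i| := (abs_mul _ _).symm
        _ ≤ |∑ j, p j * v j i| + |∑ j ∈ univ.erase i, p j * v j i| := by
            rw [hsplit]; exact abs_sub _ _
        _ ≤ (n i - 1) + ∑ j ∈ univ.erase i, |p j * v j i| :=
            add_le_add (hp i) (Finset.abs_sum_le_sum_abs _ _)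
        _ = (n i - 1) + ∑ j ∈ univ.filter (· < i), |p j * v j i| := by rw [herase]
        _ ≤ (n i - 1) + ∑ j ∈ univ.filter (· < i), 2 ^ (j:ℕ) * ((n i - 1) * |v i i|) :=
            add_le_add (le_refl _) (Finset.sum_le_sum hbound)
        _ = (n i - 1) + (2 ^ (i:ℕ) - 1) * ((n i - 1) * |v i i|) := by
            rw [← Finset.sum_mul, hgeom]
        _ ≤ (2 ^ (i:ℕ) * (n i - 1)) * |v i i| := by
            have h1 := hn i
            have h2 := hv1 i
            have h3 : (1:ℤ) ≤ 2 ^ (i:ℕ) := by exact_mod_cast Nat.one_le_two_pow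
            nlinarith
    exact le_of_mul_le_mul_right hmain (lt_of_lt_of_le one_pos (hv1 i))
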